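/- Let F be a polynomial of degree n with complex coefficients having all its zeros in the closed unit disk |z| ≤ 1, and let P be a polynomial of degree at most n such that |P(z)| ≤ |F(z)| for all |z| = 1. Then for all α, γ ∈ ℂ with Re(α) ≤ n/2 and Re(γ) ≤ n/2 and every z with |z| ≥ 1, |z²·P″(z) + (1 − α − γ)·z·P′(z) + αγ·P(z)| ≤ |z²·F″(z) + (1 − α − γ)·z·F′(z) + αγ·F(z)|. -/

import Mathlib

open Polynomial

-- reflect eval lemma
lemma reflect_eval {N : ℕ} (f : Polynomial ℂ) (hf : f.natDegree ≤ N) (w : ℂ) (hw : w ≠ 0) :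
    (reflect N f).eval w = w ^ N * f.eval w⁻¹ := by
  have : Invertible w⁻¹ := invertibleOfNonzero (inv_ne_zero hw)
  have h := Polynomial.eval₂_reflect_mul_pow (RingHom.id ℂ) w⁻¹ N f hf
  simp only [eval₂_eq_eval_map, Polynomial.map_id] at h
  rw [invOf_eq_inv, inv_inv] at h
  rw [← h, inv_pow, mul_left_comm, mul_inv_cancel₀ (pow_ne_zero _ hw), mul_one]

lemma circle_nonneg_limit (g : ℂ → ℝ) (hg : Continuous g) (T : Set ℂ) (hT : T.Finite)
    (h : ∀ z : ℂ, ‖z‖ = 1 → z ∉ T → 0 ≤ g z) :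
    ∀ ζ : ℂ, ‖ζ‖ = 1 → 0 ≤ g ζ := by
  intro ζ hζ
  set f : ℝ → ℂ := fun θ => ζ * Complex.exp (θ * Complex.I) with hf
  have habs : ∀ θ : ℝ, ‖f θ‖ = 1 := by
    intro θ
    simp only [hf, norm_mul, hζ, Complex.norm_exp_ofReal_mul_I, one_mul]
  have hζ0 : ζ ≠ 0 := by
    intro h0; rw [h0] at hζ; simp at hζ
  have hinj : Set.InjOn f (Set.Ioc (0:ℝ) 1) := by
    intro a ha b hb hab
    have hexp : Complex.exp (a * Complex.I) = Complex.exp (b * Complex.I) :=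
      mul_left_cancel₀ hζ0 hab
    rw [Complex.exp_eq_exp_iff_exists_int] at hexp
    obtain ⟨k, hk⟩ := hexp
    have hre : a = b + k * (2 * Real.pi) := by
      have := congrArg Complex.im hk
      simpa using this
    have hk0 : k = 0 := by
      by_contra hkne
      have h1 : (1:ℝ) ≤ |(k:ℝ)| := by exact_mod_cast Int.one_le_abs (by omega)
      have hpi : (3:ℝ) ≤ Real.pi := by linarith [Real.pi_gt_three]
      have hab' : |a - b| ≤ 1 := by
        rw [abs_le]; constructor <;> [linarith [ha.1, ha.2, hb.1, hb.2]; linarith [ha.1, ha.2, hb.1, hb.2]]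
      have : |a - b| = |(k:ℝ)| * (2 * Real.pi) := by
        rw [hre]
        rw [show b + (k:ℝ) * (2 * Real.pi) - b = (k:ℝ) * (2 * Real.pi) by ring, abs_mul,
          abs_of_nonneg (by positivity : (0:ℝ) ≤ 2 * Real.pi)]
      nlinarith
    rw [hk0] at hre; push_cast at hre; linarith
  -- bad angle set is finite
  have hΘ : (Set.Ioc (0:ℝ) 1 ∩ f ⁻¹' T).Finite := by
    have : Set.Ioc (0:ℝ) 1 ∩ f ⁻¹' T ⊆ ⋃ t ∈ T, {θ ∈ Set.Ioc (0:ℝ) 1 | f θ = t} := by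
      intro θ ⟨h1, h2⟩
      exact Set.mem_biUnion h2 ⟨h1, rfl⟩
    refine Set.Finite.subset (Set.Finite.biUnion hT (fun t _ => ?_)) this
    apply Set.Subsingleton.finite
    intro a ⟨ha1, ha2⟩ b ⟨hb1, hb2⟩
    exact hinj ha1 hb1 (ha2.trans hb2.symm)
  -- find δ > 0 with no bad angles in (0, δ]
  obtain ⟨δ, hδ0, hδ1, hδ⟩ : ∃ δ : ℝ, 0 < δ ∧ δ ≤ 1 ∧ ∀ θ : ℝ, 0 < θ → θ ≤ δ → θ ∉ f ⁻¹' T := by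
    by_cases hne : (Set.Ioc (0:ℝ) 1 ∩ f ⁻¹' T).Nonempty
    · set S := hΘ.toFinset with hS
      have hSne : S.Nonempty := by rwa [hS, Set.Finite.toFinset_nonempty]
      set m := S.min' hSne with hm
      have hmmem : m ∈ Set.Ioc (0:ℝ) 1 ∩ f ⁻¹' T := by
        have hmS : m ∈ S := S.min'_mem hSne
        rwa [hS, Set.Finite.mem_toFinset] at hmS
      have hm0 : 0 < m := hmmem.1.1
      refine ⟨m / 2, by linarith, by linarith [hmmem.1.2], fun θ hθ0 hθδ hθT => ?_⟩
      have hθ1 : θ ≤ 1 := by linarith [hmmem.1.2]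
      have : θ ∈ S := by
        rw [hS, Set.Finite.mem_toFinset]
        exact ⟨⟨hθ0, hθ1⟩, hθT⟩
      have := S.min'_le θ this
      linarith
    · refine ⟨1, one_pos, le_refl _, fun θ hθ0 hθδ hθT => hne ⟨θ, ⟨hθ0, hθδ⟩, hθT⟩⟩
  -- sequence
  have htend : Filter.Tendsto (fun j : ℕ => g (f (δ / (j + 1)))) Filter.atTop (nhds (g ζ)) := by
    have h1 : Filter.Tendsto (fun j : ℕ => δ / (j + 1 : ℝ)) Filter.atTop (nhds 0) :=
      by
        have h0 : Filter.Tendsto (fun j : ℕ => (j + 1 : ℝ)) Filter.atTop Filter.atTop := by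
          exact Filter.tendsto_atTop_add_const_right _ 1 tendsto_natCast_atTop_atTop
        simpa using Filter.Tendsto.div_atTop (tendsto_const_nhds (x := δ)) h0
    have h2 : Filter.Tendsto f (nhds 0) (nhds ζ) := by
      have : Continuous f := by continuity
      have := this.tendsto 0
      simpa [hf] using this
    exact (hg.tendsto ζ).comp (h2.comp h1)
  refine ge_of_tendsto htend (Filter.Eventually.of_forall fun j => ?_)
  have hθ0 : 0 < δ / (j + 1 : ℝ) := by positivity
  have hθδ : δ / (j + 1 : ℝ) ≤ δ := by
    rw [div_le_iff₀ (by positivity)]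
    nlinarith
  exact h _ (habs _) (hδ _ hθ0 hθδ)

lemma half_lt_re_div (z r : ℂ) (hz : 1 < ‖z‖) (hr : ‖r‖ ≤ 1) :
    1 / 2 < (z * (z - r)⁻¹).re := by
  have hd : z - r ≠ 0 := by
    intro h
    have : z = r := by linear_combination h
    rw [this] at hz; linarith
  have hnsq : 0 < Complex.normSq (z - r) := Complex.normSq_pos.mpr hd
  rw [show z * (z - r)⁻¹ = z / (z - r) by ring, Complex.div_re]
  have h1 : Complex.normSq z = z.re ^ 2 + z.im ^ 2 := Complex.normSq_apply z |>.trans (by ring)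
  have h2 : Complex.normSq (z - r) = (z.re - r.re) ^ 2 + (z.im - r.im) ^ 2 := by
    simp [Complex.normSq_apply]; ring
  have hz' : 1 < z.re ^ 2 + z.im ^ 2 := by
    have := Complex.sq_norm z
    nlinarith [Complex.sq_norm z]
  have hr' : r.re ^ 2 + r.im ^ 2 ≤ 1 := by
    have h3 : ‖r‖ ^ 2 ≤ 1 := by nlinarith [norm_nonneg r]
    rw [Complex.sq_norm, Complex.normSq_apply] at h3
    nlinarith
  rw [← add_div, lt_div_iff₀ hnsq, h2]
  simp only [Complex.sub_re, Complex.sub_im]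
  nlinarith

lemma deriv_eval_prod (t : Multiset ℂ) (c : ℂ) (z : ℂ) (ht : ∀ r ∈ t, z - r ≠ 0) :
    (derivative (C c * (t.map fun r => X - C r).prod)).eval z
      = (C c * (t.map fun r => X - C r).prod).eval z * (t.map fun r => (z - r)⁻¹).sum := by
  induction t using Multiset.induction_on with
  | empty => simp
  | cons r s ih =>
    have hr : z - r ≠ 0 := ht r (Multiset.mem_cons_self r s)
    have hs : ∀ x ∈ s, z - x ≠ 0 := fun x hx => ht x (Multiset.mem_cons_of_mem hx)
    have key : C c * ((r ::ₘ s).map fun r => X - C r).prod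
        = (X - C r) * (C c * (s.map fun r => X - C r).prod) := by
      rw [Multiset.map_cons, Multiset.prod_cons]; ring
    rw [key, derivative_mul, eval_add, eval_mul, eval_mul, eval_mul, ih hs]
    rw [Multiset.map_cons, Multiset.sum_cons]
    simp only [derivative_sub, derivative_X, derivative_C, sub_zero, eval_one, eval_sub, eval_X,
      eval_C, eval_mul]
    field_simp

lemma mult_le_of_circle_le (F P : Polynomial ℂ) (hF0 : F ≠ 0) (hP0 : P ≠ 0)
    (hPF : ∀ z : ℂ, ‖z‖ = 1 → ‖P.eval z‖ ≤ ‖F.eval z‖)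
    (ζ : ℂ) (hζ : ‖ζ‖ = 1) :
    rootMultiplicity ζ F ≤ rootMultiplicity ζ P := by
  by_contra hlt
  push_neg at hlt
  set a := rootMultiplicity ζ F with ha
  set b := rootMultiplicity ζ P with hb
  obtain ⟨Fq, hFq, _⟩ := F.exists_eq_pow_rootMultiplicity_mul_and_not_dvd hF0 ζ
  obtain ⟨Pq, hPq, hPqnd⟩ := P.exists_eq_pow_rootMultiplicity_mul_and_not_dvd hP0 ζ
  have key : ∀ z : ℂ, ‖z‖ = 1 → z ≠ ζ →
      0 ≤ ‖z - ζ‖ ^ (a - b) * ‖Fq.eval z‖ - ‖Pq.eval z‖ := by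
    intro z hz hzζ
    have h1 := hPF z hz
    rw [hFq, hPq, eval_mul, eval_mul, norm_mul, norm_mul, eval_pow, eval_pow, norm_pow, norm_pow,
      eval_sub, eval_X, eval_C] at h1
    have hd : 0 < ‖z - ζ‖ := by
      rw [norm_pos_iff]
      exact sub_ne_zero.mpr hzζ
    have hab : a = b + (a - b) := by omega
    rw [← ha, ← hb] at h1
    rw [hab, pow_add] at h1
    rw [mul_assoc] at h1
    have h2 := (mul_le_mul_iff_right₀ (pow_pos hd b)).mp h1
    linarith
  have hcont : Continuous fun z : ℂ =>
      ‖z - ζ‖ ^ (a - b) * ‖Fq.eval z‖ - ‖Pq.eval z‖ := by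
    exact ((continuous_norm.comp (continuous_id.sub continuous_const)).pow _).mul
      (continuous_norm.comp Fq.continuous_aeval) |>.sub
      (continuous_norm.comp Pq.continuous_aeval)
  have h0 := circle_nonneg_limit _ hcont {ζ} (Set.finite_singleton ζ)
    (fun z hz hzT => key z hz (by simpa using hzT)) ζ hζ
  simp only [sub_self, norm_zero] at h0
  have hab1 : 0 < a - b := by omega
  rw [zero_pow (by omega), zero_mul, zero_sub, neg_nonneg] at h0
  have : ‖Pq.eval ζ‖ = 0 := le_antisymm h0 (norm_nonneg _)
  rw [norm_eq_zero] at this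
  exact hPqnd (dvd_iff_isRoot.mpr this)

lemma laguerre (m : ℕ) (hm : 1 ≤ m) (R : Polynomial ℂ) (hR : R.degree = m)
    (hroots : ∀ z : ℂ, R.eval z = 0 → ‖z‖ ≤ 1) (α : ℂ) (hα : α.re ≤ (m : ℝ) / 2)
    (z : ℂ) (hz : 1 < ‖z‖) :
    z * (derivative R).eval z - α * R.eval z ≠ 0 := by
  have hR0 : R ≠ 0 := fun h => by simp [h] at hR
  have hcard : Multiset.card R.roots = R.natDegree :=
    Polynomial.splits_iff_card_roots.mp (IsAlgClosed.splits R)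
  have hfact := Polynomial.C_leadingCoeff_mul_prod_multiset_X_sub_C (p := R) hcard
  have hmem : ∀ r ∈ R.roots, ‖r‖ ≤ 1 := fun r hr =>
    hroots r ((Polynomial.isRoot_of_mem_roots hr))
  have hne : ∀ r ∈ R.roots, z - r ≠ 0 := by
    intro r hr h
    have : z = r := by linear_combination h
    have h2 := hmem r hr
    rw [this] at hz; linarith
  have hRz : R.eval z ≠ 0 := by
    intro h
    have := hroots z h
    linarith
  have hderiv : (derivative R).eval z = R.eval z * (R.roots.map fun r => (z - r)⁻¹).sum := by
    conv_lhs => rw [← hfact]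
    rw [deriv_eval_prod _ _ _ hne, hfact]
  intro hcontra
  have heq : z * (R.roots.map fun r => (z - r)⁻¹).sum = α := by
    have h1 : R.eval z * (z * (R.roots.map fun r => (z - r)⁻¹).sum - α) = 0 := by
      rw [hderiv] at hcontra
      linear_combination hcontra
    rcases mul_eq_zero.mp h1 with h | h
    · exact absurd h hRz
    · linear_combination h
  -- real part estimate
  have hsum : z * (R.roots.map fun r => (z - r)⁻¹).sum = (R.roots.map fun r => z * (z - r)⁻¹).sum := by
    rw [← Multiset.sum_map_mul_left]
  have hre : (α : ℂ).re = ((R.roots.map fun r => z * (z - r)⁻¹).sum).re := by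
    rw [← heq, hsum]
  have hre2 : ((R.roots.map fun r => z * (z - r)⁻¹).sum).re
      = ((R.roots.map fun r => (z * (z - r)⁻¹).re).sum) := by
    have := map_multiset_sum Complex.reAddGroupHom (R.roots.map fun r => z * (z - r)⁻¹)
    simpa [Multiset.map_map, Function.comp] using this
  have hlt : (R.roots.map fun _ => (1:ℝ)/2).sum < (R.roots.map fun r => (z * (z - r)⁻¹).re).sum := by
    apply Multiset.sum_lt_sum_of_nonempty
    · intro hemp
      have : Multiset.card R.roots = 0 := by rw [hemp]; simp
      rw [hcard, natDegree_eq_of_degree_eq_some hR] at this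
      omega
    · intro r hr
      exact half_lt_re_div z r hz (hmem r hr)
  have hsum2 : (R.roots.map fun _ => (1:ℝ)/2).sum = (m : ℝ) / 2 := by
    rw [Multiset.map_const', Multiset.sum_replicate, hcard,
      natDegree_eq_of_degree_eq_some hR]
    push_cast
    ring
  rw [hsum2] at hlt
  rw [hre, hre2] at hα
  linarith

lemma exterior_bound (n : ℕ) (F P : Polynomial ℂ) (hF : F.degree = n) (hP : P.degree ≤ n)
    (hFzeros : ∀ z : ℂ, F.eval z = 0 → ‖z‖ ≤ 1)
    (hPF : ∀ z : ℂ, ‖z‖ = 1 → ‖P.eval z‖ ≤ ‖F.eval z‖) :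
    (∀ z : ℂ, 1 < ‖z‖ → ‖P.eval z‖ ≤ ‖F.eval z‖) ∧
      ‖P.coeff n‖ ≤ ‖F.coeff n‖ := by
  classical
  have hF0 : F ≠ 0 := fun h => by simp [h] at hF
  have hFnat : F.natDegree = n := natDegree_eq_of_degree_eq_some hF
  by_cases hP0 : P = 0
  · subst hP0
    simp
  -- boundary roots
  set M : Multiset ℂ := F.roots.filter (fun r => ‖r‖ = 1) with hM
  set D : Polynomial ℂ := (M.map fun a => X - C a).prod with hD
  have hDmonic : D.Monic := monic_multiset_prod_of_monic M _ (fun a _ => monic_X_sub_C a)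
  have hD0 : D ≠ 0 := hDmonic.ne_zero
  have hDdeg : D.natDegree = Multiset.card M := natDegree_multiset_prod_X_sub_C_eq_card M
  have hDroots : D.roots = M := roots_multiset_prod_X_sub_C M
  have hMF : M ≤ F.roots := Multiset.filter_le _ _
  have hDF : D ∣ F := (Multiset.prod_X_sub_C_dvd_iff_le_roots hF0 M).mpr hMF
  have hMP : M ≤ P.roots := by
    rw [Multiset.le_iff_count]
    intro ζ
    rw [hM, Multiset.count_filter]
    by_cases hζ : ‖ζ‖ = 1
    · rw [if_pos hζ, count_roots, count_roots]
      exact mult_le_of_circle_le F P hF0 hP0 hPF ζ hζ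
    · rw [if_neg hζ]
      exact Nat.zero_le _
  have hDP : D ∣ P := (Multiset.prod_X_sub_C_dvd_iff_le_roots hP0 M).mpr hMP
  obtain ⟨F₁, hF₁⟩ := hDF
  obtain ⟨P₁, hP₁⟩ := hDP
  have hF₁0 : F₁ ≠ 0 := fun h => hF0 (by rw [hF₁, h, mul_zero])
  have hP₁0 : P₁ ≠ 0 := fun h => hP0 (by rw [hP₁, h, mul_zero])
  set d := Multiset.card M with hd
  have hdn : d ≤ n := by
    have := Multiset.card_le_card hMF
    rwa [← hd, (splits_iff_card_roots.mp (IsAlgClosed.splits F)), hFnat] at this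
  set m := n - d with hm
  have hF₁deg : F₁.natDegree = m := by
    have := natDegree_mul hD0 hF₁0
    rw [← hF₁, hFnat, hDdeg] at this
    omega
  have hP₁deg : P₁.natDegree ≤ m := by
    have h1 := natDegree_mul hD0 hP₁0
    rw [← hP₁, hDdeg] at h1
    have h2 : P.natDegree ≤ n := natDegree_le_iff_degree_le.mpr hP
    omega
  -- F₁ has zeros strictly inside
  have hF₁zeros : ∀ ζ : ℂ, F₁.eval ζ = 0 → ‖ζ‖ < 1 := by
    intro ζ hζ
    have hFζ : F.eval ζ = 0 := by rw [hF₁, eval_mul, hζ, mul_zero]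
    have hle := hFzeros ζ hFζ
    rcases lt_or_eq_of_le hle with h | h
    · exact h
    · exfalso
      have hmul : rootMultiplicity ζ F = rootMultiplicity ζ D + rootMultiplicity ζ F₁ := by
        rw [hF₁]; exact rootMultiplicity_mul (by rw [← hF₁]; exact hF0)
      have hDmult : rootMultiplicity ζ D = rootMultiplicity ζ F := by
        rw [← count_roots, hDroots, hM, Multiset.count_filter, if_pos h, count_roots]
      have hF₁mult : 0 < rootMultiplicity ζ F₁ :=
        (rootMultiplicity_pos hF₁0).mpr hζ
      omega
  -- circle inequality for P₁, F₁
  have hcirc : ∀ z : ℂ, ‖z‖ = 1 →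
      ‖P₁.eval z‖ ≤ ‖F₁.eval z‖ := by
    have := circle_nonneg_limit
      (fun z => ‖F₁.eval z‖ - ‖P₁.eval z‖)
      ((continuous_norm.comp F₁.continuous_aeval).sub
        (continuous_norm.comp P₁.continuous_aeval))
      {z : ℂ | D.IsRoot z} (finite_setOf_isRoot hD0) ?_
    · intro z hz
      have := this z hz
      simpa using this
    · intro z hz hzT
      have hDz : ‖D.eval z‖ ≠ 0 := by
        simpa [norm_eq_zero] using hzT
      have h1 := hPF z hz
      rw [hF₁, hP₁, eval_mul, eval_mul, norm_mul, norm_mul] at h1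
      have h2 := (mul_le_mul_iff_right₀ (lt_of_le_of_ne (norm_nonneg _) (Ne.symm hDz))).mp h1
      show 0 ≤ ‖F₁.eval z‖ - ‖P₁.eval z‖
      linarith
  -- max modulus on reflected polynomials
  set Fst := reflect m F₁ with hFst
  set Pst := reflect m P₁ with hPst
  have hFstne : ∀ w : ℂ, ‖w‖ ≤ 1 → Fst.eval w ≠ 0 := by
    intro w hw
    by_cases hw0 : w = 0
    · subst hw0
      rw [hFst, ← coeff_zero_eq_eval_zero, coeff_reflect, revAt_le (Nat.zero_le m), Nat.sub_zero,
        ← hF₁deg, coeff_natDegree]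
      exact leadingCoeff_ne_zero.mpr hF₁0
    · rw [hFst, reflect_eval F₁ hF₁deg.le w hw0]
      apply mul_ne_zero (pow_ne_zero _ hw0)
      intro h
      have := hF₁zeros _ h
      rw [norm_inv] at this
      have h1 : 0 < ‖w‖ := by
        rw [norm_pos_iff]; exact hw0
      rw [inv_lt_one_iff₀] at this
      rcases this with h | h
      · exact hw0 (norm_eq_zero.mp (le_antisymm h (norm_nonneg w)))
      · linarith
  have hmax : ∀ w : ℂ, ‖w‖ ≤ 1 → ‖Pst.eval w‖ ≤ ‖Fst.eval w‖ := by
    intro w hw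
    set f : ℂ → ℂ := fun w => Pst.eval w / Fst.eval w with hf
    have hdiff : DiffContOnCl ℂ f (Metric.ball 0 1) := by
      apply DifferentiableOn.diffContOnCl
      rw [closure_ball (0:ℂ) one_ne_zero]
      apply DifferentiableOn.div
      · exact Pst.differentiable.differentiableOn
      · exact Fst.differentiable.differentiableOn
      · intro x hx
        exact hFstne x (by simpa [Complex.dist_eq] using Metric.mem_closedBall.mp hx)
    have hbd : ∀ ζ ∈ frontier (Metric.ball (0:ℂ) 1), ‖f ζ‖ ≤ 1 := by
      rw [frontier_ball (0:ℂ) one_ne_zero]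
      intro ζ hζs
      have hζ1 : ‖ζ‖ = 1 := by
        simpa [Complex.dist_eq] using Metric.mem_sphere.mp hζs
      have hζ0 : ζ ≠ 0 := by
        intro h; rw [h] at hζ1; simp at hζ1
      have hinv : ‖ζ⁻¹‖ = 1 := by rw [norm_inv, hζ1, inv_one]
      have h1 := hcirc ζ⁻¹ hinv
      rw [hf]
      simp only [norm_div]
      rw [div_le_one (lt_of_le_of_ne (norm_nonneg _)
        (fun h => hFstne ζ hζ1.le (norm_eq_zero.mp h.symm)))]
      rw [hPst, hFst, reflect_eval P₁ hP₁deg ζ hζ0, reflect_eval F₁ hF₁deg.le ζ hζ0,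
        norm_mul, norm_mul, norm_pow, hζ1, one_pow, one_mul, one_mul]
      exact h1
    have hcl := Complex.norm_le_of_forall_mem_frontier_norm_le Metric.isBounded_ball hdiff hbd
      (show w ∈ closure (Metric.ball (0:ℂ) 1) by
        rw [closure_ball (0:ℂ) one_ne_zero]
        simpa [Complex.dist_eq] using hw)
    rw [hf] at hcl
    simp only [norm_div] at hcl
    have hFw : 0 < ‖Fst.eval w‖ := lt_of_le_of_ne (norm_nonneg _)
      (fun h => hFstne w hw (norm_eq_zero.mp h.symm))
    rw [div_le_one hFw] at hcl
    simpa using hcl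
  constructor
  · intro z hz
    have hz0 : z ≠ 0 := by
      intro h; rw [h] at hz; simp at hz; linarith
    have hwle : ‖z⁻¹‖ ≤ 1 := by
      rw [norm_inv]
      exact le_of_lt (inv_lt_one_of_one_lt₀ hz)
    have h1 := hmax z⁻¹ hwle
    rw [hPst, hFst, reflect_eval P₁ hP₁deg z⁻¹ (inv_ne_zero hz0),
      reflect_eval F₁ hF₁deg.le z⁻¹ (inv_ne_zero hz0), inv_inv, norm_mul, norm_mul] at h1
    have hpow : 0 < ‖z⁻¹ ^ m‖ := by
      apply norm_pos_iff.mpr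
      exact pow_ne_zero _ (inv_ne_zero hz0)
    have h2 : ‖P₁.eval z‖ ≤ ‖F₁.eval z‖ :=
      le_of_mul_le_mul_left h1 hpow
    rw [hF₁, hP₁, eval_mul, eval_mul, norm_mul, norm_mul]
    exact mul_le_mul_of_nonneg_left h2 (norm_nonneg _)
  · have h1 := hmax 0 (by simp)
    rw [hPst, hFst, ← coeff_zero_eq_eval_zero, ← coeff_zero_eq_eval_zero, coeff_reflect,
      coeff_reflect, revAt_le (Nat.zero_le m), Nat.sub_zero] at h1
    have hDc : D.coeff d = 1 := by
      rw [← hDdeg]; exact hDmonic.coeff_natDegree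
    have hcoeffP : P.coeff n = P₁.coeff m := by
      rw [hP₁]
      have hc := coeff_mul_add_eq_of_natDegree_le (le_of_eq hDdeg) hP₁deg
      rw [show d + m = n by omega] at hc
      rw [hc, hDc, one_mul]
    have hcoeffF : F.coeff n = F₁.coeff m := by
      rw [hF₁]
      have hc := coeff_mul_add_eq_of_natDegree_le (le_of_eq hDdeg) hF₁deg.le
      rw [show d + m = n by omega] at hc
      rw [hc, hDc, one_mul]
    rw [hcoeffP, hcoeffF]
    exact h1

lemma step_compare (n : ℕ) (hn : 1 ≤ n) (F P : Polynomial ℂ) (hF : F.degree = n)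
    (hP : P.degree ≤ n)
    (hFzeros : ∀ z : ℂ, F.eval z = 0 → ‖z‖ ≤ 1)
    (hPF : ∀ z : ℂ, ‖z‖ = 1 → ‖P.eval z‖ ≤ ‖F.eval z‖)
    (α : ℂ) (hα : α.re ≤ (n : ℝ) / 2) :
    ∀ z : ℂ, 1 ≤ ‖z‖ →
      ‖z * (derivative P).eval z - α * P.eval z‖
        ≤ ‖z * (derivative F).eval z - α * F.eval z‖ := by
  obtain ⟨hext, hcoeff⟩ := exterior_bound n F P hF hP hFzeros hPF
  have hFnat : F.natDegree = n := natDegree_eq_of_degree_eq_some hF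
  have hF0 : F ≠ 0 := fun h => by simp [h] at hF
  -- first: strict exterior
  have main : ∀ z : ℂ, 1 < ‖z‖ →
      ‖z * (derivative P).eval z - α * P.eval z‖
        ≤ ‖z * (derivative F).eval z - α * F.eval z‖ := by
    intro z hz
    set A := z * (derivative P).eval z - α * P.eval z with hA
    set B := z * (derivative F).eval z - α * F.eval z with hB
    have hBne : B ≠ 0 := laguerre n hn F hF hFzeros α hα z hz
    by_contra hcon
    push_neg at hcon
    set lam := A / B with hlam
    have hlam1 : 1 < ‖lam‖ := by
      rw [hlam, norm_div]
      rw [lt_div_iff₀ (norm_pos_iff.mpr hBne)]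
      simpa using hcon
    set R := C lam * F - P with hR
    have hRcoeff : R.coeff n ≠ 0 := by
      rw [hR, coeff_sub, coeff_C_mul]
      intro h
      have h1 : lam * F.coeff n = P.coeff n := by linear_combination h
      have h2 : ‖F.coeff n‖ ≠ 0 := by
        rw [← hFnat]
        simpa [norm_eq_zero] using leadingCoeff_ne_zero.mpr hF0
      have h3 := congrArg (‖·‖) h1
      rw [norm_mul] at h3
      nlinarith [norm_nonneg (F.coeff n), hcoeff,
        lt_of_le_of_ne (norm_nonneg (F.coeff n)) (Ne.symm h2)]
    have hRdeg : R.degree = n := by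
      apply le_antisymm
      · rw [hR]
        apply le_trans (degree_sub_le _ _)
        apply max_le
        · have hlam0 : lam ≠ 0 := by
            intro h0
            rw [h0] at hlam1
            simp at hlam1
            linarith
          rw [degree_C_mul hlam0]
          exact le_of_eq hF
        · exact hP
      · exact le_degree_of_ne_zero hRcoeff
    have hRzeros : ∀ y : ℂ, R.eval y = 0 → ‖y‖ ≤ 1 := by
      intro y hy
      by_contra hy1
      push_neg at hy1
      have hFy : F.eval y ≠ 0 := by
        intro h
        exact absurd (hFzeros y h) (not_le.mpr hy1)
      rw [hR, eval_sub, eval_mul, eval_C, sub_eq_zero] at hy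
      have h1 := hext y hy1
      rw [← hy, norm_mul] at h1
      have h2 : 0 < ‖F.eval y‖ := norm_pos_iff.mpr hFy
      nlinarith
    have := laguerre n hn R hRdeg hRzeros α hα z hz
    apply this
    rw [hR]
    simp only [derivative_sub, derivative_C_mul, eval_sub, eval_mul, eval_C]
    rw [hlam]
    field_simp
    rw [hA, hB]
    ring
  intro z hz
  rcases lt_or_eq_of_le hz with h | h
  · exact main z h
  · -- |z| = 1 : continuity
    set c : ℕ → ℝ := fun k => 1 + 1/(k+1) with hc
    set w : ℕ → ℂ := fun k => (c k : ℂ) * z with hw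
    have habs : ∀ k : ℕ, 1 < ‖w k‖ := by
      intro k
      rw [hw]
      simp only
      rw [norm_mul, ← h, mul_one, Complex.norm_real, Real.norm_eq_abs, hc]
      have h1 : (0:ℝ) < 1/((k:ℝ)+1) := by positivity
      rw [abs_of_pos (by linarith)]
      linarith
    have hcten : Filter.Tendsto c Filter.atTop (nhds 1) := by
      rw [hc]
      have h0 : Filter.Tendsto (fun k : ℕ => (k + 1 : ℝ)) Filter.atTop Filter.atTop :=
        Filter.tendsto_atTop_add_const_right _ 1 tendsto_natCast_atTop_atTop
      have := Filter.Tendsto.div_atTop (tendsto_const_nhds (x := (1:ℝ))) h0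
      simpa using Filter.Tendsto.add (tendsto_const_nhds (x := (1:ℝ))) this
    have hwten : Filter.Tendsto w Filter.atTop (nhds z) := by
      rw [hw]
      have h1 : Filter.Tendsto (fun k => ((c k : ℂ))) Filter.atTop (nhds (1:ℂ)) := by
        exact (Complex.continuous_ofReal.tendsto 1).comp hcten
      simpa using h1.mul_const z
    set G : ℂ → ℝ := fun y =>
      ‖y * (derivative F).eval y - α * F.eval y‖
        - ‖y * (derivative P).eval y - α * P.eval y‖ with hG
    have hGcont : Continuous G := by
      rw [hG]
      apply Continuous.sub
      · exact continuous_norm.comp ((continuous_id.mul (derivative F).continuous_aeval).sub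
          (continuous_const.mul F.continuous_aeval))
      · exact continuous_norm.comp ((continuous_id.mul (derivative P).continuous_aeval).sub
          (continuous_const.mul P.continuous_aeval))
    have hlim : Filter.Tendsto (fun k => G (w k)) Filter.atTop (nhds (G z)) :=
      (hGcont.tendsto z).comp hwten
    have hge : 0 ≤ G z := by
      refine ge_of_tendsto hlim (Filter.Eventually.of_forall fun k => ?_)
      have := main (w k) (habs k)
      rw [hG]
      simp only
      linarith
    rw [hG] at hge
    simp only at hge
    linarith

theorem comparison_second_order
    (n : ℕ) (F P : Polynomial ℂ) (hF : F.degree = n) (hP : P.degree ≤ n)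
    (hFzeros : ∀ z : ℂ, F.eval z = 0 → ‖z‖ ≤ 1)
    (hPF : ∀ z : ℂ, ‖z‖ = 1 → ‖(P.eval z)‖ ≤ ‖(F.eval z)‖)
    (α γ : ℂ) (hα : α.re ≤ (n : ℝ) / 2) (hγ : γ.re ≤ (n : ℝ) / 2) :
    ∀ z : ℂ, 1 ≤ ‖z‖ →
      ‖(z ^ 2 * (Polynomial.derivative (Polynomial.derivative P)).eval z
          + (1 - α - γ) * z * (Polynomial.derivative P).eval z + α * γ * P.eval z)‖
        ≤ ‖(z ^ 2 * (Polynomial.derivative (Polynomial.derivative F)).eval z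
            + (1 - α - γ) * z * (Polynomial.derivative F).eval z + α * γ * F.eval z)‖ := by
  intro z hz
  rcases Nat.eq_zero_or_pos n with hn0 | hn
  · -- n = 0 : constants
    subst hn0
    have hPc : P = C (P.coeff 0) := eq_C_of_degree_le_zero (by exact_mod_cast hP)
    have hFc : F = C (F.coeff 0) := eq_C_of_degree_le_zero (le_of_eq (by exact_mod_cast hF))
    have h1 := hPF 1 (by simp)
    rw [hPc, hFc] at h1 ⊢
    simp only [derivative_C, eval_zero, mul_zero, zero_add, eval_C, derivative_zero] at h1 ⊢
    rw [norm_mul, norm_mul, norm_mul, norm_mul]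
    exact mul_le_mul_of_nonneg_left h1 (by positivity)
  · set QP : Polynomial ℂ := X * derivative P - C α * P with hQP
    set QF : Polynomial ℂ := X * derivative F - C α * F with hQF
    have hFnat : F.natDegree = n := natDegree_eq_of_degree_eq_some hF
    have hF0 : F ≠ 0 := fun h => by simp [h] at hF
    have hPnat : P.natDegree ≤ n := natDegree_le_iff_degree_le.mpr hP
    -- degree bound for QP
    have hdegaux : ∀ Q : Polynomial ℂ, Q.natDegree ≤ n →
        (X * derivative Q - C α * Q).natDegree ≤ n := by
      intro Q hQ
      apply le_trans (natDegree_sub_le _ _)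
      apply max_le
      · apply le_trans (natDegree_mul_le)
        have h1 := natDegree_derivative_le Q
        have h2 : (X : Polynomial ℂ).natDegree = 1 := natDegree_X
        omega
      · apply le_trans (natDegree_mul_le)
        have h2 : (C α).natDegree = 0 := natDegree_C α
        omega
    have hQPdeg : QP.degree ≤ n := by
      rw [hQP]
      exact natDegree_le_iff_degree_le.mp (hdegaux P hPnat)
    -- degree of QF
    obtain ⟨k, hk⟩ : ∃ k, n = k + 1 := ⟨n - 1, by omega⟩
    subst hk
    have hQFcoeff : QF.coeff (k + 1) ≠ 0 := by
      rw [hQF, coeff_sub, coeff_C_mul, coeff_X_mul, coeff_derivative]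
      have h1 : F.coeff (k + 1) ≠ 0 := by
        rw [← hFnat]
        exact leadingCoeff_ne_zero.mpr hF0
      have h2 : (k : ℂ) + 1 - α ≠ 0 := by
        intro h
        have hα' : α = (k : ℂ) + 1 := by linear_combination -h
        rw [hα'] at hα
        simp only [Complex.add_re, Complex.natCast_re, Complex.one_re] at hα
        push_cast at hα
        linarith
      intro h
      apply h2
      have h3 : F.coeff (k + 1) * ((k : ℂ) + 1 - α) = 0 := by
        push_cast at h ⊢
        linear_combination h
      rcases mul_eq_zero.mp h3 with h' | h'
      · exact absurd h' h1
      · exact h'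
    have hQFdeg : QF.degree = (k + 1) := by
      apply le_antisymm
      · rw [hQF]
        exact natDegree_le_iff_degree_le.mp (hdegaux F (le_of_eq hFnat))
      · exact le_degree_of_ne_zero hQFcoeff
    -- eval forms
    have hevalQP : ∀ y : ℂ, QP.eval y = y * (derivative P).eval y - α * P.eval y := by
      intro y; rw [hQP]; simp
    have hevalQF : ∀ y : ℂ, QF.eval y = y * (derivative F).eval y - α * F.eval y := by
      intro y; rw [hQF]; simp
    -- zeros of QF
    have hQFzeros : ∀ y : ℂ, QF.eval y = 0 → ‖y‖ ≤ 1 := by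
      intro y hy
      by_contra hy1
      push_neg at hy1
      rw [hevalQF] at hy
      exact laguerre (k + 1) hn F hF hFzeros α hα y hy1 hy
    -- circle inequality for QP vs QF
    have hQPF : ∀ y : ℂ, ‖y‖ = 1 →
        ‖QP.eval y‖ ≤ ‖QF.eval y‖ := by
      intro y hy
      rw [hevalQP, hevalQF]
      exact step_compare (k + 1) hn F P hF hP hFzeros hPF α hα y (le_of_eq hy.symm)
    have hfinal := step_compare (k + 1) hn QF QP hQFdeg hQPdeg hQFzeros hQPF γ hγ z hz
    -- rewrite both sides
    have hrwP : z * (derivative QP).eval z - γ * QP.eval z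
        = z ^ 2 * (derivative (derivative P)).eval z
          + (1 - α - γ) * z * (derivative P).eval z + α * γ * P.eval z := by
      rw [hQP]
      simp only [derivative_sub, derivative_mul, derivative_X, derivative_C, one_mul, zero_mul,
        eval_sub, eval_add, eval_mul, eval_X, eval_C, zero_add]
      ring
    have hrwF : z * (derivative QF).eval z - γ * QF.eval z
        = z ^ 2 * (derivative (derivative F)).eval z
          + (1 - α - γ) * z * (derivative F).eval z + α * γ * F.eval z := by
      rw [hQF]
      simp only [derivative_sub, derivative_mul, derivative_X, derivative_C, one_mul, zero_mul,
        eval_sub, eval_add, eval_mul, eval_X, eval_C, zero_add]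
      ring
    rw [← hrwP, ← hrwF]
    exact hfinal
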